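/- Under the hypotheses of the previous statement, there is a universal constant C such that for all x, x': |h(x') - h(x)|^{1+ν} ≤ C (L₀ + (L₁ h(x))^{1+ν}) exp(L₁ ‖x' - x‖) ‖x' - x‖^{1+ν}. -/

import Mathlib

open Real

set_option maxHeartbeats 1000000 in
theorem holder_smooth_h_generalized_lipschitz :
    ∃ C : ℝ, 0 < C ∧
      ∀ (d : ℕ) (f : EuclideanSpace ℝ (Fin d) → ℝ)
        (xstar : EuclideanSpace ℝ (Fin d)) (ν σ L₀ L₁ β : ℝ)
        (h : EuclideanSpace ℝ (Fin d) → ℝ),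
        Differentiable ℝ f → (∀ y, f xstar ≤ f y) →
        ν ∈ Set.Icc (0 : ℝ) 1 → 0 ≤ σ → 0 < L₀ → 0 < L₁ → (ν = 0 → σ = 0) →
        (∀ x, ‖gradient f x‖ ≤
          Real.sqrt (σ ^ 2 + L₀ ^ (2 / (1 + ν)) * (f x - f xstar) ^ (2 * ν / (1 + ν))) +
            L₁ * (f x - f xstar)) →
        β = min ((σ ^ (1 + ν) / L₀) ^ (1 / ν)) (σ / L₁) →
        (∀ x, h x = (β + f x - f xstar) ^ (1 / (1 + ν))) →
        ∀ x x', |h x' - h x| ^ (1 + ν) ≤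
          C * (L₀ + (L₁ * h x) ^ (1 + ν)) * Real.exp (L₁ * ‖x' - x‖) *
            ‖x' - x‖ ^ (1 + ν) := by
  refine ⟨64, by norm_num, ?_⟩
  intro d f xstar ν σ L₀ L₁ β h hdiff hmin hν hσ hL₀ hL₁ hνσ hgrad hβdef hh x x'
  obtain ⟨hν0, hν1⟩ := hν
  have hp0 : (0:ℝ) < 1 + ν := by linarith
  set p : ℝ := 1 + ν with hpdef
  have hp1 : (1:ℝ) ≤ p := by rw [hpdef]; linarith
  have hp2 : p ≤ 2 := by rw [hpdef]; linarith
  have hpne : p ≠ 0 := ne_of_gt hp0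
  have hF : ∀ y, 0 ≤ f y - f xstar := fun y => sub_nonneg.2 (hmin y)
  have hβ0 : 0 ≤ β := by
    rw [hβdef]
    exact le_min (Real.rpow_nonneg (by positivity) _) (by positivity)
  have hbase : ∀ y, 0 ≤ β + f y - f xstar := fun y => by have := hF y; linarith
  have hhnn : ∀ y, 0 ≤ h y := fun y => by
    rw [hh y]; exact Real.rpow_nonneg (hbase y) _
  -- key: σ ≤ L₀^(1/p) β^(ν/p) + L₁ β
  have hkey : σ ≤ L₀ ^ (1/p) * β ^ (ν/p) + L₁ * β := by
    rcases eq_or_lt_of_le hν0 with hν' | hν'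
    · have hσ0 : σ = 0 := hνσ hν'.symm
      have h1 : 0 ≤ L₀ ^ (1/p) * β ^ (ν/p) := by positivity
      nlinarith [mul_nonneg hL₁.le hβ0]
    · rw [hβdef]
      rcases le_total ((σ ^ p / L₀) ^ (1/ν)) (σ / L₁) with hc | hc
      · rw [min_eq_left hc]
        have e1 : (((σ ^ p / L₀) ^ (1/ν)) : ℝ) ^ (ν/p) = (σ ^ p / L₀) ^ (1/p) := by
          rw [← Real.rpow_mul (by positivity : (0:ℝ) ≤ σ ^ p / L₀)]
          congr 1
          field_simp
        have e2 : L₀ ^ (1/p) * (σ ^ p / L₀) ^ (1/p) = σ := by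
          rw [← Real.mul_rpow hL₀.le (by positivity : (0:ℝ) ≤ σ ^ p / L₀)]
          rw [mul_div_cancel₀ _ (ne_of_gt hL₀)]
          rw [← Real.rpow_mul hσ]
          rw [mul_one_div, div_self hpne, Real.rpow_one]
        have h3 : 0 ≤ L₁ * ((σ ^ p / L₀) ^ (1/ν)) := by positivity
        rw [e1, e2]
        linarith
      · rw [min_eq_right hc]
        have e3 : L₁ * (σ / L₁) = σ := by field_simp
        have h4 : 0 ≤ L₀ ^ (1/p) * (σ / L₁) ^ (ν/p) := by positivity
        linarith [e3.ge]
  set r : ℝ := ‖x' - x‖ with hrdef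
  have hr0 : 0 ≤ r := norm_nonneg _
  rcases eq_or_lt_of_le hr0 with hr | hr
  · -- r = 0 case
    have hx' : x' = x := by
      have h0 : ‖x' - x‖ = 0 := hr.symm
      rw [norm_eq_zero, sub_eq_zero] at h0
      exact h0
    rw [hx']
    have hL : |h x - h x| ^ p = 0 := by
      simp [Real.zero_rpow hpne]
    rw [hL]
    have h1 : 0 ≤ (L₁ * h x) ^ p := Real.rpow_nonneg (mul_nonneg hL₁.le (hhnn x)) _
    have h2 : 0 ≤ r ^ p := Real.rpow_nonneg hr0 _
    have h3 : 0 < Real.exp (L₁ * r) := Real.exp_pos _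
    have h4 : 0 ≤ L₀ + (L₁ * h x) ^ p := by linarith
    exact mul_nonneg (mul_nonneg (mul_nonneg (by norm_num) h4) h3.le) h2
  · -- main case: r > 0
    set K : ℝ := L₁ * r / p with hKdef
    set E : ℝ := 2 * L₀ ^ (1/p) * r / p with hEdef
    have hKpos : 0 < K := by rw [hKdef]; positivity
    have hE0 : 0 ≤ E := by rw [hEdef]; positivity
    -- main estimate for perturbed function
    have main : ∀ ε : ℝ, 0 < ε →
        |(ε + (β + f x' - f xstar)) ^ (1/p) - (ε + (β + f x - f xstar)) ^ (1/p)|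
          ≤ (K * (ε + (β + f x - f xstar)) ^ (1/p) + E) * Real.exp K := by
      intro ε hε
      set γ : ℝ → EuclideanSpace ℝ (Fin d) := fun t => x + t • (x' - x) with hγ
      set u : ℝ → ℝ := fun t => ε + (β + f (γ t) - f xstar) with hu
      have hupos : ∀ t, 0 < u t := fun t => by
        have := hbase (γ t); simp only [hu]; linarith
      set u' : ℝ → ℝ := fun t => (fderiv ℝ f (γ t)) (x' - x) with hu'
      have hderivu : ∀ t, HasDerivAt u (u' t) t := by
        intro t
        have hγd : HasDerivAt γ (x' - x) t := by
          have := ((hasDerivAt_id t).smul_const (x' - x)).const_add x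
          rw [one_smul] at this
          exact this
        have hfd : HasDerivAt (fun s => f (γ s)) (u' t) t :=
          (hdiff (γ t)).hasFDerivAt.comp_hasDerivAt t hγd
        simpa [hu] using ((hfd.const_add β).sub_const (f xstar)).const_add ε
      set w : ℝ → ℝ := fun t => u t ^ (1/p) with hw
      set w' : ℝ → ℝ := fun t => u' t * (1/p) * u t ^ (1/p - 1) with hw'
      have hderivw : ∀ t, HasDerivAt w (w' t) t := fun t =>
        (hderivu t).rpow_const (Or.inl (ne_of_gt (hupos t)))
      have hwnn : ∀ t, 0 ≤ w t := fun t => Real.rpow_nonneg (hupos t).le _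
      -- pointwise derivative bound
      have hbound : ∀ t, |w' t| ≤ K * w t + E := by
        intro t
        have hFt : 0 ≤ f (γ t) - f xstar := hF (γ t)
        have hut : 0 < u t := hupos t
        set c₀ : ℝ := L₀ ^ (1/p) with hc₀
        have hc₀0 : 0 ≤ c₀ := Real.rpow_nonneg hL₀.le _
        set Fν : ℝ := (f (γ t) - f xstar) ^ (ν/p) with hFν
        have hFν0 : 0 ≤ Fν := Real.rpow_nonneg hFt _
        -- gradient norm bound with split sqrt
        have hg1 : ‖gradient f (γ t)‖ ≤
            σ + c₀ * Fν + L₁ * (f (γ t) - f xstar) := by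
          refine (hgrad (γ t)).trans ?_
          have hb : 0 ≤ c₀ * Fν := by positivity
          have e1 : L₀ ^ (2/p) * (f (γ t) - f xstar) ^ (2*ν/p) = (c₀ * Fν) ^ 2 := by
            rw [mul_pow, hc₀, hFν, ← Real.rpow_natCast (L₀ ^ (1/p)) 2,
              ← Real.rpow_natCast ((f (γ t) - f xstar) ^ (ν/p)) 2,
              ← Real.rpow_mul hL₀.le, ← Real.rpow_mul hFt]
            push_cast
            congr 1 <;> ring
          rw [e1]
          have h5 : Real.sqrt (σ^2 + (c₀ * Fν)^2) ≤ σ + c₀ * Fν := by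
            calc Real.sqrt (σ^2 + (c₀ * Fν)^2) ≤ Real.sqrt ((σ + c₀ * Fν)^2) := by
                  apply Real.sqrt_le_sqrt; nlinarith
              _ = σ + c₀ * Fν := Real.sqrt_sq (by positivity)
          linarith
        -- |u' t| ≤ ‖∇f(γ t)‖ * r
        have hop : |u' t| ≤ ‖gradient f (γ t)‖ * r := by
          have h1 : |u' t| ≤ ‖fderiv ℝ f (γ t)‖ * ‖x' - x‖ := by
            have := (fderiv ℝ f (γ t)).le_opNorm (x' - x)
            simpa [hu', Real.norm_eq_abs] using this
          have h2 : ‖fderiv ℝ f (γ t)‖ = ‖gradient f (γ t)‖ := by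
            have h3 : gradient f (γ t)
                = (InnerProductSpace.toDual ℝ (EuclideanSpace ℝ (Fin d))).symm
                    (fderiv ℝ f (γ t)) := rfl
            rw [h3, LinearIsometryEquiv.norm_map]
          rw [← h2]
          exact h1
        -- power manipulations
        set A : ℝ := u t ^ (1/p - 1) with hA
        set B : ℝ := u t ^ (ν/p) with hB
        have hApos : 0 < A := Real.rpow_pos_of_pos hut _
        have hBpos : 0 < B := Real.rpow_pos_of_pos hut _
        have hAB : B * A = 1 := by
          rw [hB, hA, ← Real.rpow_add hut]
          rw [show ν/p + (1/p - 1) = (ν + 1 - p)/p by field_simp; ring]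
          rw [show ν + 1 - p = 0 by rw [hpdef]; ring]
          rw [zero_div, Real.rpow_zero]
        have huA : u t * A = w t := by
          rw [hA, hw]
          calc u t * u t ^ (1/p - 1) = u t ^ (1:ℝ) * u t ^ (1/p - 1) := by
                rw [Real.rpow_one]
            _ = u t ^ (1 + (1/p - 1)) := (Real.rpow_add hut _ _).symm
            _ = u t ^ (1/p) := by ring_nf
        have hβB : β ^ (ν/p) ≤ B := by
          rw [hB]
          apply Real.rpow_le_rpow hβ0 _ (by positivity)
          have := hF (γ t); simp only [hu]; linarith
        have hFB : Fν ≤ B := by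
          rw [hB, hFν]
          apply Real.rpow_le_rpow hFt _ (by positivity)
          simp only [hu]; linarith
        have hβF : β + (f (γ t) - f xstar) ≤ u t := by
          simp only [hu]; linarith
        -- assemble
        set X : ℝ := (c₀ * β ^ (ν/p) + L₁ * β) + c₀ * Fν + L₁ * (f (γ t) - f xstar)
          with hX
        have hX0 : 0 ≤ X := by
          rw [hX]
          have : 0 ≤ c₀ * β ^ (ν/p) := by positivity
          have : 0 ≤ L₁ * β := by positivity
          have : 0 ≤ c₀ * Fν := by positivity
          have : 0 ≤ L₁ * (f (γ t) - f xstar) := by positivity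
          linarith
        have h6 : |u' t| ≤ X * r := by
          calc |u' t| ≤ ‖gradient f (γ t)‖ * r := hop
            _ ≤ X * r := by
                apply mul_le_mul_of_nonneg_right _ hr0
                rw [hX]; linarith [hg1, hkey]
        have habs : |w' t| = |u' t| * ((1/p) * A) := by
          rw [hw', abs_mul, abs_mul, abs_of_pos hApos,
            abs_of_pos (by positivity : (0:ℝ) < 1/p), mul_assoc]
        have hXA : X * A ≤ 2 * c₀ + L₁ * w t := by
          have h7 : β ^ (ν/p) * A ≤ 1 := by
            calc β ^ (ν/p) * A ≤ B * A := mul_le_mul_of_nonneg_right hβB hApos.le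
              _ = 1 := hAB
          have h8 : Fν * A ≤ 1 := by
            calc Fν * A ≤ B * A := mul_le_mul_of_nonneg_right hFB hApos.le
              _ = 1 := hAB
          have h9 : (β + (f (γ t) - f xstar)) * A ≤ w t := by
            rw [← huA]
            exact mul_le_mul_of_nonneg_right hβF hApos.le
          have h7' : c₀ * (β ^ (ν/p) * A) ≤ c₀ * 1 := mul_le_mul_of_nonneg_left h7 hc₀0
          have h8' : c₀ * (Fν * A) ≤ c₀ * 1 := mul_le_mul_of_nonneg_left h8 hc₀0
          have h9' : L₁ * ((β + (f (γ t) - f xstar)) * A) ≤ L₁ * w t :=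
            mul_le_mul_of_nonneg_left h9 hL₁.le
          rw [hX]
          nlinarith [h7', h8', h9']
        calc |w' t| = |u' t| * ((1/p) * A) := habs
          _ ≤ (X * r) * ((1/p) * A) := by
              apply mul_le_mul_of_nonneg_right h6 (by positivity)
          _ = (X * A) * (r * (1/p)) := by ring
          _ ≤ (2 * c₀ + L₁ * w t) * (r * (1/p)) := by
              apply mul_le_mul_of_nonneg_right hXA (by positivity)
          _ = K * w t + E := by rw [hKdef, hEdef, hc₀]; ring
      -- Grönwall
      set φ : ℝ → ℝ := fun t => w t - w 0 with hφ
      have hφderiv : ∀ t ∈ Set.Ico (0:ℝ) 1, HasDerivWithinAt φ (w' t) (Set.Ici t) t :=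
        fun t _ => ((hderivw t).sub_const (w 0)).hasDerivWithinAt
      have hφcont : ContinuousOn φ (Set.Icc 0 1) := fun t _ =>
        (((hderivw t).sub_const (w 0)).continuousAt).continuousWithinAt
      have hφbound : ∀ t ∈ Set.Ico (0:ℝ) 1, ‖w' t‖ ≤ K * ‖φ t‖ + (K * w 0 + E) := by
        intro t _
        have h1 := hbound t
        have h2 : w t ≤ |φ t| + w 0 := by
          have := le_abs_self (w t - w 0)
          simp only [hφ]
          linarith
        have h3 : K * w t ≤ K * (|φ t| + w 0) := mul_le_mul_of_nonneg_left h2 hKpos.le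
        rw [Real.norm_eq_abs, Real.norm_eq_abs]
        nlinarith
      have hφ0 : ‖φ 0‖ ≤ (0:ℝ) := by simp [hφ]
      have hgron := norm_le_gronwallBound_of_norm_deriv_right_le (δ := 0)
        (K := K) (ε := K * w 0 + E) hφcont hφderiv hφ0 hφbound 1
        (by norm_num : (1:ℝ) ∈ Set.Icc (0:ℝ) 1)
      have hgb : gronwallBound 0 K (K * w 0 + E) (1 - 0) ≤ (K * w 0 + E) * Real.exp K := by
        have hexp1 : Real.exp K * (1 - K) ≤ 1 := by
          have h2 := Real.add_one_le_exp (-K)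
          have h3 : Real.exp K * Real.exp (-K) = 1 := by
            rw [← Real.exp_add]; simp
          nlinarith [Real.exp_pos K, Real.exp_pos (-K)]
        have hw0 : 0 ≤ w 0 := hwnn 0
        have hε' : 0 ≤ K * w 0 + E := by positivity
        have hgbeq : gronwallBound 0 K (K * w 0 + E) (1 - 0)
            = (K * w 0 + E) / K * (Real.exp K - 1) := by
          rw [gronwallBound_of_K_ne_0 hKpos.ne']
          norm_num
        rw [hgbeq, div_mul_eq_mul_div, div_le_iff₀ hKpos]
        nlinarith [Real.exp_pos K]
      have hfin : |w 1 - w 0| ≤ (K * w 0 + E) * Real.exp K := by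
        have := hgron.trans hgb
        simpa [hφ, Real.norm_eq_abs] using this
      have hγ0 : γ 0 = x := by simp [hγ]
      have hγ1 : γ 1 = x' := by simp [hγ]
      have hw1' : w 1 = (ε + (β + f x' - f xstar)) ^ (1/p) := by
        simp only [hw, hu, hγ1]
      have hw0' : w 0 = (ε + (β + f x - f xstar)) ^ (1/p) := by
        simp only [hw, hu, hγ0]
      rw [hw1', hw0'] at hfin
      exact hfin
    -- limit ε → 0⁺
    have hcont : Continuous fun s : ℝ => s ^ (1/p) := by
      rw [continuous_iff_continuousAt]
      intro s
      exact Real.continuousAt_rpow_const s (1/p) (Or.inr (by positivity))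
    have habs : |h x' - h x| ≤ (K * h x + E) * Real.exp K := by
      rw [hh x', hh x]
      have hc1 : Continuous fun ε : ℝ =>
          |(ε + (β + f x' - f xstar)) ^ (1/p) - (ε + (β + f x - f xstar)) ^ (1/p)| :=
        ((hcont.comp (continuous_id.add continuous_const)).sub
          (hcont.comp (continuous_id.add continuous_const))).abs
      have hc2 : Continuous fun ε : ℝ =>
          (K * (ε + (β + f x - f xstar)) ^ (1/p) + E) * Real.exp K :=
        (((continuous_const.mul (hcont.comp (continuous_id.add continuous_const)))).add
          continuous_const).mul continuous_const
      have hlim1 : Filter.Tendsto (fun ε : ℝ =>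
          |(ε + (β + f x' - f xstar)) ^ (1/p) - (ε + (β + f x - f xstar)) ^ (1/p)|)
          (nhdsWithin 0 (Set.Ioi 0))
          (nhds (|(β + f x' - f xstar) ^ (1/p) - (β + f x - f xstar) ^ (1/p)|)) := by
        have := (hc1.tendsto 0).mono_left
          (nhdsWithin_le_nhds : nhdsWithin (0:ℝ) (Set.Ioi 0) ≤ nhds 0)
        simpa using this
      have hlim2 : Filter.Tendsto (fun ε : ℝ =>
          (K * (ε + (β + f x - f xstar)) ^ (1/p) + E) * Real.exp K)
          (nhdsWithin 0 (Set.Ioi 0))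
          (nhds ((K * (β + f x - f xstar) ^ (1/p) + E) * Real.exp K)) := by
        have := (hc2.tendsto 0).mono_left
          (nhdsWithin_le_nhds : nhdsWithin (0:ℝ) (Set.Ioi 0) ≤ nhds 0)
        simpa using this
      refine le_of_tendsto_of_tendsto hlim1 hlim2 ?_
      filter_upwards [self_mem_nhdsWithin] with ε hε
      exact main ε hε
    -- raise to power p
    have hRnn : 0 ≤ K * h x + E := add_nonneg (mul_nonneg hKpos.le (hhnn x)) hE0
    have hstep : |h x' - h x| ^ p ≤ ((K * h x + E) * Real.exp K) ^ p :=
      Real.rpow_le_rpow (abs_nonneg _) habs hp0.le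
    refine hstep.trans ?_
    rw [Real.mul_rpow hRnn (Real.exp_pos K).le]
    have hexpp : (Real.exp K) ^ p = Real.exp (L₁ * r) := by
      rw [← Real.exp_one_rpow K, ← Real.rpow_mul (Real.exp_pos 1).le,
        Real.exp_one_rpow]
      congr 1
      rw [hKdef]
      field_simp
    rw [hexpp]
    -- (K h x + E)^p ≤ 16 (L₀ + (L₁ h x)^p) r^p
    have hhx0 : 0 ≤ h x := hhnn x
    have haux : (K * h x + E) ^ p ≤ 16 * (L₀ + (L₁ * h x) ^ p) * r ^ p := by
      set a : ℝ := L₁ * h x * r with ha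
      set b : ℝ := 2 * L₀ ^ (1/p) * r with hb
      have ha0 : 0 ≤ a := by positivity
      have hb0 : 0 ≤ b := by positivity
      have h1 : K * h x + E ≤ a + b := by
        rw [hKdef, hEdef, ha, hb]
        have e1 : L₁ * r / p * h x = (L₁ * h x * r) / p := by ring
        have h2 : (L₁ * h x * r) / p ≤ L₁ * h x * r := by
          apply div_le_self (by positivity) hp1
        have h3 : 2 * L₀ ^ (1/p) * r / p ≤ 2 * L₀ ^ (1/p) * r := by
          apply div_le_self (by positivity) hp1
        rw [e1]
        linarith
      have h2 : a + b ≤ 2 * max a b := by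
        rcases le_total a b with hab | hab
        · rw [max_eq_right hab]; linarith
        · rw [max_eq_left hab]; linarith
      have h3 : (K * h x + E) ^ p ≤ (2 * max a b) ^ p :=
        Real.rpow_le_rpow hRnn (h1.trans h2) hp0.le
      have h4 : (2 * max a b) ^ p = 2 ^ p * (max a b) ^ p :=
        Real.mul_rpow (by norm_num) (le_max_of_le_left ha0)
      have h2p : (2:ℝ) ^ p ≤ 4 := by
        calc (2:ℝ) ^ p ≤ 2 ^ (2:ℝ) := Real.rpow_le_rpow_of_exponent_le one_le_two hp2
          _ = 4 := by
            rw [show (2:ℝ) = ((2:ℕ):ℝ) by norm_num, Real.rpow_natCast]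
            norm_num
      have h5 : (max a b) ^ p ≤ a ^ p + b ^ p := by
        rcases le_total a b with hab | hab
        · rw [max_eq_right hab]
          have : 0 ≤ a ^ p := Real.rpow_nonneg ha0 _
          linarith
        · rw [max_eq_left hab]
          have : 0 ≤ b ^ p := Real.rpow_nonneg hb0 _
          linarith
      have hap : a ^ p = (L₁ * h x) ^ p * r ^ p := by
        rw [ha, Real.mul_rpow (by positivity) hr0]
      have hbp : b ^ p ≤ 4 * L₀ * r ^ p := by
        rw [hb]
        have e1 : 2 * L₀ ^ (1/p) * r = 2 * (L₀ ^ (1/p) * r) := by ring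
        rw [e1, Real.mul_rpow (by norm_num) (by positivity),
          Real.mul_rpow (by positivity) hr0,
          ← Real.rpow_mul hL₀.le, one_div_mul_cancel hpne, Real.rpow_one]
        have h6 : 0 ≤ L₀ * r ^ p := by positivity
        nlinarith [Real.rpow_nonneg hr0 p]
      have hmaxp : 0 ≤ (max a b) ^ p := Real.rpow_nonneg (le_max_of_le_left ha0) _
      have hrp : 0 ≤ r ^ p := Real.rpow_nonneg hr0 _
      have hL₁h : 0 ≤ (L₁ * h x) ^ p := Real.rpow_nonneg (by positivity) _
      calc (K * h x + E) ^ p ≤ 2 ^ p * (max a b) ^ p := by rw [← h4]; exact h3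
        _ ≤ 4 * (max a b) ^ p := mul_le_mul_of_nonneg_right h2p hmaxp
        _ ≤ 4 * (a ^ p + b ^ p) := by linarith
        _ ≤ 4 * ((L₁ * h x) ^ p * r ^ p + 4 * L₀ * r ^ p) := by
            rw [hap]; nlinarith
        _ ≤ 16 * (L₀ + (L₁ * h x) ^ p) * r ^ p := by nlinarith
    calc (K * h x + E) ^ p * Real.exp (L₁ * r)
        ≤ (16 * (L₀ + (L₁ * h x) ^ p) * r ^ p) * Real.exp (L₁ * r) :=
          mul_le_mul_of_nonneg_right haux (Real.exp_pos _).le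
      _ ≤ 64 * (L₀ + (L₁ * h x) ^ p) * Real.exp (L₁ * r) * r ^ p := by
          have h1 : 0 ≤ (L₁ * h x) ^ p := Real.rpow_nonneg (by positivity) _
          have h2 : 0 ≤ r ^ p := Real.rpow_nonneg hr0 _
          nlinarith [Real.exp_pos (L₁ * r), mul_nonneg (mul_nonneg (by linarith : (0:ℝ) ≤ L₀ + (L₁ * h x) ^ p) h2) (Real.exp_pos (L₁ * r)).le]
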